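/- (Proposition 2.) Let E be a finite-dimensional real inner product space and let J : E → ℝ be differentiable with L-Lipschitz gradient (‖∇J(x) − ∇J(y)‖ ≤ L‖x − y‖ for all x, y), where L > 0. Let η > 0, let θ ∈ E, let e ∈ E, and let Δ : E → E be an invertible symmetric linear map satisfying ⟨Δ v, v⟩ ≥ (1/η)‖v‖² for all v ∈ E. Define the Newton-type update θ⁺ = θ − Δ⁻¹(∇J(θ) − e) and set γ = θ⁺ − θ. Then J(θ) − J(θ⁺) ≥ ((2 − Lη)/(2η)) ‖γ‖² − ‖e‖ · ‖γ‖. -/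

import Mathlib

open Filter
open scoped RealInnerProductSpace

section aux

variable {E : Type*} [NormedAddCommGroup E] [InnerProductSpace ℝ E] [CompleteSpace E]

lemma descent_lemma (J : E → ℝ) (L : ℝ) (hL : 0 < L)
    (hJd : Differentiable ℝ J)
    (hlip : ∀ x y : E, ‖gradient J x - gradient J y‖ ≤ L * ‖x - y‖)
    (x γ : E) :
    J (x + γ) ≤ J x + ⟪gradient J x, γ⟫ + L / 2 * ‖γ‖ ^ 2 := by
  set g' : ℝ → ℝ := fun t => ⟪gradient J (x + t • γ), γ⟫ with hg'
  have hderiv : ∀ t : ℝ, HasDerivAt (fun t : ℝ => J (x + t • γ)) (g' t) t := by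
    intro t
    have h1 : HasDerivAt (fun t : ℝ => x + t • γ) γ t := by
      simpa using ((hasDerivAt_id t).smul_const γ).const_add x
    have h2 := ((hJd (x + t • γ)).hasGradientAt.hasFDerivAt).comp_hasDerivAt t h1
    simpa [InnerProductSpace.toDual_apply_apply, Function.comp_def, g', gradient,
      InnerProductSpace.toDual_symm_apply] using h2
  have hgradlip : LipschitzWith (Real.toNNReal L) (gradient J) := by
    apply LipschitzWith.of_dist_le_mul
    intro a b
    simp only [dist_eq_norm, Real.coe_toNNReal L hL.le]
    exact hlip a b
  have hgcont : Continuous g' := by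
    apply Continuous.inner
    · exact hgradlip.continuous.comp (by continuity)
    · exact continuous_const
  have hint : IntervalIntegrable g' MeasureTheory.volume 0 1 :=
    hgcont.intervalIntegrable 0 1
  have heq : ∫ t in (0:ℝ)..1, g' t = J (x + γ) - J x := by
    have := intervalIntegral.integral_eq_sub_of_hasDerivAt
      (f := fun t : ℝ => J (x + t • γ)) (f' := g')
      (a := 0) (b := 1) (fun t _ => hderiv t) hint
    simpa using this
  have hbound : ∀ t ∈ Set.Icc (0:ℝ) 1,
      g' t ≤ ⟪gradient J x, γ⟫ + L * ‖γ‖ ^ 2 * t := by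
    intro t ht
    have : g' t - ⟪gradient J x, γ⟫ = ⟪gradient J (x + t • γ) - gradient J x, γ⟫ := by
      simp [g', inner_sub_left]
    have hcs : ⟪gradient J (x + t • γ) - gradient J x, γ⟫ ≤
        ‖gradient J (x + t • γ) - gradient J x‖ * ‖γ‖ := real_inner_le_norm _ _
    have hl := hlip (x + t • γ) x
    have hnorm : ‖(x + t • γ) - x‖ = t * ‖γ‖ := by
      simp [norm_smul, abs_of_nonneg ht.1]
    rw [hnorm] at hl
    nlinarith [norm_nonneg γ, mul_le_mul_of_nonneg_right hl (norm_nonneg γ)]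
  have hintle : ∫ t in (0:ℝ)..1, g' t ≤
      ∫ t in (0:ℝ)..1, (⟪gradient J x, γ⟫ + L * ‖γ‖ ^ 2 * t) := by
    apply intervalIntegral.integral_mono_on (by norm_num) hint
    · exact (Continuous.intervalIntegrable (by continuity) 0 1)
    · exact hbound
  have hrhs : ∫ t in (0:ℝ)..1, (⟪gradient J x, γ⟫ + L * ‖γ‖ ^ 2 * t) =
      ⟪gradient J x, γ⟫ + L / 2 * ‖γ‖ ^ 2 := by
    rw [intervalIntegral.integral_add (intervalIntegrable_const)
      (intervalIntegral.intervalIntegrable_id.const_mul _),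
      intervalIntegral.integral_const_mul, integral_id]
    simp; ring
  rw [heq] at hintle
  rw [hrhs] at hintle
  linarith

end aux

/-- Proposition 2: per-iteration decrease bound for the Newton-type update
`θ⁺ = θ − Δ⁻¹(∇J(θ) − e)` with `γ = θ⁺ − θ`:
`J(θ) − J(θ⁺) ≥ ((2 − Lη)/(2η))‖γ‖² − ‖e‖‖γ‖`. -/
theorem newton_step_decrease
    {E : Type*} [NormedAddCommGroup E] [InnerProductSpace ℝ E] [FiniteDimensional ℝ E]
    (J : E → ℝ) (L : ℝ) (hL : 0 < L)
    (hJd : Differentiable ℝ J)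
    (hlip : ∀ x y : E, ‖gradient J x - gradient J y‖ ≤ L * ‖x - y‖)
    (η : ℝ) (hη : 0 < η)
    (θ e : E) (Δ : E ≃ₗ[ℝ] E)
    (hsym : ∀ u v : E, ⟪Δ u, v⟫ = ⟪u, Δ v⟫)
    (hlower : ∀ v : E, (1 / η) * ‖v‖ ^ 2 ≤ ⟪Δ v, v⟫) :
    J θ - J (θ - Δ.symm (gradient J θ - e)) ≥
      ((2 - L * η) / (2 * η)) * ‖(θ - Δ.symm (gradient J θ - e)) - θ‖ ^ 2
        - ‖e‖ * ‖(θ - Δ.symm (gradient J θ - e)) - θ‖ := by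
  set γ : E := (θ - Δ.symm (gradient J θ - e)) - θ with hγ
  have hγ' : γ = -(Δ.symm (gradient J θ - e)) := by rw [hγ]; abel
  have hΔγ : Δ γ = -(gradient J θ - e) := by
    rw [hγ', map_neg, Δ.apply_symm_apply]
  have hgrad : gradient J θ = -(Δ γ) + e := by rw [hΔγ]; abel
  have hplus : θ + γ = θ - Δ.symm (gradient J θ - e) := by rw [hγ]; abel
  have hdesc := descent_lemma J L hL hJd hlip θ γ
  rw [hplus] at hdesc
  have hinner : ⟪gradient J θ, γ⟫ = -⟪Δ γ, γ⟫ + ⟪e, γ⟫ := by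
    rw [hgrad, inner_add_left, inner_neg_left]
  have hcs : ⟪e, γ⟫ ≤ ‖e‖ * ‖γ‖ := real_inner_le_norm e γ
  have hlow := hlower γ
  have key : (2 - L * η) / (2 * η) = 1 / η - L / 2 := by
    field_simp
  rw [key]
  nlinarith [sq_nonneg ‖γ‖]
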